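/- Let M ≥ 1 and let K ∈ ℝ^{M×M} be symmetric positive semidefinite. Consider the function f defined on the open set of matrices B ∈ ℝ^{M×M} for which I + K B is invertible and det(I + K B) > 0 by f(B) = (1/2)·log det(I + K B) − (1/2)·tr( K B (I + K B)⁻¹ ). Then at every symmetric positive definite B, f is Fréchet differentiable and its derivative in any direction V ∈ ℝ^{M×M} equals tr( M(B) · V ), where M(B) = (1/2)·(I + K B)⁻¹ K B K (I + B K)⁻¹. -/

import Mathlib

open Matrix

attribute [local instance] Matrix.normedAddCommGroup Matrix.normedSpace

variable {n : Type*} [Fintype n] [DecidableEq n]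

/-- The entry map as a continuous linear map. -/
noncomputable def entryCLM (i j : n) : Matrix n n ℝ →L[ℝ] ℝ :=
  LinearMap.toContinuousLinearMap
    { toFun := fun X => X i j
      map_add' := fun X Y => rfl
      map_smul' := fun c X => rfl }

lemma entryCLM_apply (i j : n) (X : Matrix n n ℝ) : entryCLM i j X = X i j := rfl

lemma differentiableAt_det (A : Matrix n n ℝ) :
    DifferentiableAt ℝ (Matrix.det : Matrix n n ℝ → ℝ) A := by
  have h : (Matrix.det : Matrix n n ℝ → ℝ) =
      fun X => ∑ σ : Equiv.Perm n, ((Equiv.Perm.sign σ : ℤ) : ℝ) * ∏ i, X (σ i) i := by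
    funext X
    rw [Matrix.det_apply']
  rw [h]
  refine DifferentiableAt.fun_sum fun σ _ => ?_
  refine DifferentiableAt.const_mul ?_ _
  exact (HasFDerivAt.finset_prod
    (u := Finset.univ) (g := fun i (X : Matrix n n ℝ) => X (σ i) i)
    (g' := fun i => entryCLM (σ i) i) (x := A)
    (fun i _ => (entryCLM (σ i) i).hasFDerivAt)).differentiableAt

lemma hasFDerivAt_det (A : Matrix n n ℝ) :
    HasFDerivAt (Matrix.det : Matrix n n ℝ → ℝ)
      (LinearMap.toContinuousLinearMap
        ((Matrix.traceLinearMap n ℝ ℝ).comp (LinearMap.mulLeft ℝ (adjugate A)))) A := by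
  have hdiff := differentiableAt_det A
  have key : ∀ i j : n, fderiv ℝ Matrix.det A (Matrix.single i j 1) = adjugate A j i := by
    intro i j
    have hline : ∀ t : ℝ, Matrix.det (A + t • Matrix.single i j 1)
        = Matrix.det A + t * adjugate A j i := by
      intro t
      have h1 : A + t • Matrix.single i j 1 = A.updateRow i (A i + t • (Pi.single j 1 : n → ℝ)) := by
        ext r c
        by_cases hr : r = i
        · subst hr
          simp only [Matrix.add_apply, Matrix.smul_apply, Matrix.single,
            Matrix.updateRow_self, Matrix.of_apply, smul_eq_mul, Pi.add_apply, Pi.smul_apply,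
            Pi.single_apply, mul_ite, mul_one, mul_zero]
          congr 1
          refine if_congr ?_ rfl rfl
          rw [true_and, eq_comm]
        · simp only [Matrix.add_apply, Matrix.smul_apply, Matrix.single,
            Matrix.updateRow_ne hr, Matrix.of_apply, smul_eq_mul]
          rw [if_neg (by tauto), mul_zero, add_zero]
      rw [h1, Matrix.det_updateRow_add, Matrix.det_updateRow_smul, Matrix.updateRow_eq_self,
        Matrix.adjugate_apply]
    have hd1 : HasDerivAt (fun t : ℝ => Matrix.det (A + t • Matrix.single i j 1))
        (adjugate A j i) 0 := by
      have : (fun t : ℝ => Matrix.det (A + t • Matrix.single i j 1))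
          = fun t => Matrix.det A + t * adjugate A j i := funext hline
      rw [this]
      simpa using ((hasDerivAt_id (0 : ℝ)).mul_const (adjugate A j i)).const_add (Matrix.det A)
    have hcurve : HasDerivAt (fun t : ℝ => A + t • Matrix.single i j 1)
        (Matrix.single i j 1) 0 := by
      have h := ((hasDerivAt_id (0 : ℝ)).smul_const (Matrix.single i j 1)).const_add A
      rw [one_smul] at h
      exact h
    have hA0 : A + (0 : ℝ) • Matrix.single i j 1 = A := by simp
    have hd2 : HasDerivAt (fun t : ℝ => Matrix.det (A + t • Matrix.single i j 1))
        (fderiv ℝ Matrix.det A (Matrix.single i j 1)) 0 := by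
      have hf : HasFDerivAt Matrix.det (fderiv ℝ Matrix.det A) (A + (0:ℝ) • Matrix.single i j 1) := by
        rw [hA0]; exact hdiff.hasFDerivAt
      exact hf.comp_hasDerivAt 0 hcurve
    exact (hd2.unique hd1)
  have heq : fderiv ℝ Matrix.det A = LinearMap.toContinuousLinearMap
      ((Matrix.traceLinearMap n ℝ ℝ).comp (LinearMap.mulLeft ℝ (adjugate A))) := by
    refine ContinuousLinearMap.ext fun V => ?_
    have hVdec : V = ∑ i : n, ∑ j : n, (V i j) • Matrix.single i j (1 : ℝ) := by
      conv_lhs => rw [matrix_eq_sum_single V]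
      refine Finset.sum_congr rfl fun i _ => Finset.sum_congr rfl fun j _ => ?_
      rw [Matrix.smul_single, smul_eq_mul, mul_one]
    rw [hVdec]
    simp only [map_sum, _root_.map_smul]
    refine Finset.sum_congr rfl fun i _ => Finset.sum_congr rfl fun j _ => ?_
    rw [key]
    congr 1
    simp only [LinearMap.coe_toContinuousLinearMap', LinearMap.comp_apply,
      LinearMap.mulLeft_apply, Matrix.traceLinearMap_apply]
    rw [Matrix.trace]
    simp only [Matrix.diag_apply, Matrix.mul_apply, Matrix.single, Matrix.of_apply,
      mul_ite, mul_one, mul_zero]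
    have hrow : ∀ x : n, (∑ x1 : n, if i = x1 ∧ j = x then A.adjugate x x1 else 0)
        = if j = x then A.adjugate x i else 0 := by
      intro x
      by_cases h : j = x
      · simp [h]
      · simp [h]
    simp only [hrow, Finset.sum_ite_eq, Finset.mem_univ, if_true]
  rw [← heq]
  exact hdiff.hasFDerivAt

lemma my_norm_mul_le (X Y : Matrix n n ℝ) :
    ‖X * Y‖ ≤ (Fintype.card n : ℝ) * ‖X‖ * ‖Y‖ := by
  rw [Matrix.norm_le_iff (by positivity)]
  intro i j
  calc ‖(X * Y) i j‖ = ‖∑ k, X i k * Y k j‖ := by rw [Matrix.mul_apply]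
    _ ≤ ∑ k, ‖X i k * Y k j‖ := norm_sum_le _ _
    _ ≤ ∑ _k : n, ‖X‖ * ‖Y‖ := Finset.sum_le_sum fun k _ => by
        rw [norm_mul]
        exact mul_le_mul (Matrix.norm_entry_le_entrywise_sup_norm X)
          (Matrix.norm_entry_le_entrywise_sup_norm Y) (norm_nonneg _) (norm_nonneg _)
    _ = (Fintype.card n : ℝ) * ‖X‖ * ‖Y‖ := by
        rw [Finset.sum_const, Finset.card_univ, nsmul_eq_mul, mul_assoc]

lemma inv_perturb_identity {A V : Matrix n n ℝ} (hA : IsUnit A.det)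
    (hX : IsUnit (A + V).det) :
    (A + V)⁻¹ - A⁻¹ + A⁻¹ * V * A⁻¹ = A⁻¹ * V * (A + V)⁻¹ * V * A⁻¹ := by
  have h2 : A⁻¹ * V * (A + V)⁻¹ = A⁻¹ - (A + V)⁻¹ := by
    have e1 : A⁻¹ * V = A⁻¹ * (A + V) - 1 := by
      rw [Matrix.mul_add, Matrix.nonsing_inv_mul _ hA, add_sub_cancel_left]
    rw [e1, Matrix.sub_mul, Matrix.one_mul, Matrix.mul_assoc,
      Matrix.mul_nonsing_inv _ hX, Matrix.mul_one]
  have h3 : (A + V)⁻¹ * (V * A⁻¹) = A⁻¹ - (A + V)⁻¹ := by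
    have e1 : V * A⁻¹ = (A + V) * A⁻¹ - 1 := by
      rw [Matrix.add_mul, Matrix.mul_nonsing_inv _ hA, add_sub_cancel_left]
    rw [e1, Matrix.mul_sub, Matrix.mul_one, ← Matrix.mul_assoc,
      Matrix.nonsing_inv_mul _ hX, Matrix.one_mul]
  symm
  calc A⁻¹ * V * (A + V)⁻¹ * V * A⁻¹
      = (A⁻¹ * V * (A + V)⁻¹) * (V * A⁻¹) := by rw [Matrix.mul_assoc]
    _ = (A⁻¹ - (A + V)⁻¹) * (V * A⁻¹) := by rw [h2]
    _ = A⁻¹ * (V * A⁻¹) - (A + V)⁻¹ * (V * A⁻¹) := by rw [Matrix.sub_mul]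
    _ = A⁻¹ * V * A⁻¹ - (A⁻¹ - (A + V)⁻¹) := by rw [h3, Matrix.mul_assoc]
    _ = (A + V)⁻¹ - A⁻¹ + A⁻¹ * V * A⁻¹ := by abel

lemma hasFDerivAt_matrix_inv (A : Matrix n n ℝ) (hA : IsUnit A.det) :
    HasFDerivAt (fun X : Matrix n n ℝ => X⁻¹)
      (LinearMap.toContinuousLinearMap
        (-((LinearMap.mulRight ℝ A⁻¹).comp (LinearMap.mulLeft ℝ A⁻¹)))) A := by
  refine hasFDerivAt_iff_isLittleO_nhds_zero.mpr ?_
  have hdetA : A.det ≠ 0 := hA.ne_zero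
  have hcontinv : ContinuousAt (Inv.inv : Matrix n n ℝ → Matrix n n ℝ) A :=
    continuousAt_matrix_inv A (by
      have := NormedRing.inverse_continuousAt hA.unit
      simpa using this)
  have hadd : ContinuousAt (fun V : Matrix n n ℝ => A + V) 0 :=
    (continuous_const.add continuous_id).continuousAt
  have hcont : ContinuousAt (fun V : Matrix n n ℝ => (A + V)⁻¹) 0 := by
    have h' : ContinuousAt (Inv.inv : Matrix n n ℝ → Matrix n n ℝ)
        ((fun V : Matrix n n ℝ => A + V) 0) := by simpa using hcontinv
    exact h'.comp hadd
  have hU : ∀ᶠ V : Matrix n n ℝ in nhds 0, IsUnit (A + V).det := by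
    have hc : ContinuousAt (fun V : Matrix n n ℝ => (A + V).det) 0 :=
      ((continuous_const.add continuous_id).matrix_det).continuousAt
    have := hc.eventually_ne (by simpa using hdetA)
    filter_upwards [this] with V hV using isUnit_iff_ne_zero.mpr hV
  have hbound : ∀ᶠ V : Matrix n n ℝ in nhds 0, ‖(A + V)⁻¹‖ ≤ ‖A⁻¹‖ + 1 := by
    have ht : Filter.Tendsto (fun V : Matrix n n ℝ => ‖(A + V)⁻¹‖) (nhds 0)
        (nhds ‖(A + (0 : Matrix n n ℝ))⁻¹‖) := hcont.norm
    rw [add_zero] at ht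
    exact (ht.eventually_lt_const (by linarith)).mono fun V hV => hV.le
  have hO : (fun V : Matrix n n ℝ => (A + V)⁻¹ - A⁻¹ -
      (LinearMap.toContinuousLinearMap
        (-((LinearMap.mulRight ℝ A⁻¹).comp (LinearMap.mulLeft ℝ A⁻¹)))) V)
      =O[nhds 0] fun V => ‖V‖ * ‖V‖ := by
    rw [Asymptotics.isBigO_iff]
    refine ⟨(Fintype.card n : ℝ)^4 * ‖A⁻¹‖^2 * (‖A⁻¹‖ + 1), ?_⟩
    filter_upwards [hU, hbound] with V hu hb
    have hLv : (LinearMap.toContinuousLinearMap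
        (-((LinearMap.mulRight ℝ A⁻¹).comp (LinearMap.mulLeft ℝ A⁻¹)))) V
        = -(A⁻¹ * V * A⁻¹) := rfl
    rw [hLv, sub_neg_eq_add, inv_perturb_identity hA hu]
    set c := (Fintype.card n : ℝ) with hc
    have hc0 : (0:ℝ) ≤ c := by positivity
    set a := ‖A⁻¹‖ with ha
    set v := ‖V‖ with hv
    have ha0 : (0:ℝ) ≤ a := norm_nonneg _
    have hv0 : (0:ℝ) ≤ v := norm_nonneg _
    have hx0 : (0:ℝ) ≤ ‖(A + V)⁻¹‖ := norm_nonneg _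
    have n1 : ‖A⁻¹ * V‖ ≤ c * a * v := my_norm_mul_le _ _
    have n2 : ‖A⁻¹ * V * (A + V)⁻¹‖ ≤ c * (c * a * v) * (a + 1) :=
      (my_norm_mul_le _ _).trans
        (mul_le_mul (mul_le_mul_of_nonneg_left n1 hc0) hb hx0 (by positivity))
    have n3 : ‖A⁻¹ * V * (A + V)⁻¹ * V‖ ≤ c * (c * (c * a * v) * (a + 1)) * v :=
      (my_norm_mul_le _ _).trans
        (mul_le_mul_of_nonneg_right (mul_le_mul_of_nonneg_left n2 hc0) hv0)
    have n4 : ‖A⁻¹ * V * (A + V)⁻¹ * V * A⁻¹‖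
        ≤ c * (c * (c * (c * a * v) * (a + 1)) * v) * a :=
      (my_norm_mul_le _ _).trans
        (mul_le_mul_of_nonneg_right (mul_le_mul_of_nonneg_left n3 hc0) ha0)
    rw [Real.norm_of_nonneg (mul_nonneg hv0 hv0)]
    calc ‖A⁻¹ * V * (A + V)⁻¹ * V * A⁻¹‖
        ≤ c * (c * (c * (c * a * v) * (a + 1)) * v) * a := n4
      _ = c^4 * a^2 * (a + 1) * (v * v) := by ring
  refine hO.trans_isLittleO ?_
  rw [Asymptotics.isLittleO_iff]
  intro c hc
  filter_upwards [Metric.ball_mem_nhds (0 : Matrix n n ℝ) hc] with V hV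
  rw [mem_ball_zero_iff] at hV
  rw [Real.norm_of_nonneg (by positivity)]
  have : ‖V‖ * ‖V‖ ≤ c * ‖V‖ := mul_le_mul_of_nonneg_right hV.le (norm_nonneg _)
  simpa using this

/-- Fréchet derivative of the `B`-dependent part of the KL
divergence, `f(B) = ½ log det (I + K B) − ½ tr (K B (I + K B)⁻¹)`, at every
symmetric positive definite `B`: the derivative in direction `V` is
`tr (M(B) V)` with `M(B) = ½ (I + K B)⁻¹ K B K (I + B K)⁻¹`. -/
theorem stmt_9 (M : ℕ) (hM : 1 ≤ M) (K : Matrix (Fin M) (Fin M) ℝ)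
    (hK : K.PosSemidef) (B : Matrix (Fin M) (Fin M) ℝ) (hB : B.PosDef) :
    HasFDerivAt
      (fun B : Matrix (Fin M) (Fin M) ℝ =>
        (1 / 2 : ℝ) * Real.log (1 + K * B).det
          - (1 / 2 : ℝ) * (K * B * (1 + K * B)⁻¹).trace)
      (LinearMap.toContinuousLinearMap
        ((Matrix.traceLinearMap (Fin M) ℝ ℝ).comp
          (LinearMap.mulLeft ℝ
            ((1 / 2 : ℝ) • ((1 + K * B)⁻¹ * K * B * K * (1 + B * K)⁻¹))))) B := by
  set A0 : Matrix (Fin M) (Fin M) ℝ := 1 + K * B with hA0def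
  -- determinant of A0 is positive
  have hBdet : IsUnit B.det := isUnit_iff_ne_zero.mpr hB.det_pos.ne'
  have hfac : (B⁻¹ + K) * B = A0 := by
    rw [hA0def, Matrix.add_mul, Matrix.nonsing_inv_mul _ hBdet]
  have hPD : (B⁻¹ + K).PosDef := hB.inv.add_posSemidef hK
  have hA0pos : 0 < A0.det := by
    rw [← hfac, Matrix.det_mul]
    exact mul_pos hPD.det_pos hB.det_pos
  have hA0u : IsUnit A0.det := isUnit_iff_ne_zero.mpr hA0pos.ne'
  -- 1 + B * K is the transpose of A0
  have hBt : Bᵀ = B := by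
    have := hB.1
    rwa [Matrix.IsHermitian, Matrix.conjTranspose_eq_transpose_of_trivial] at this
  have hKt : Kᵀ = K := by
    have := hK.1
    rwa [Matrix.IsHermitian, Matrix.conjTranspose_eq_transpose_of_trivial] at this
  have hCt : (1 + B * K) = A0ᵀ := by
    rw [hA0def, Matrix.transpose_add, Matrix.transpose_one, Matrix.transpose_mul, hBt, hKt]
  have hCu : IsUnit (1 + B * K).det := by
    rw [hCt, Matrix.det_transpose]; exact hA0u
  -- derivative of the inner affine map
  set LK : Matrix (Fin M) (Fin M) ℝ →L[ℝ] Matrix (Fin M) (Fin M) ℝ :=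
    LinearMap.toContinuousLinearMap (LinearMap.mulLeft ℝ K) with hLK
  have hinner : HasFDerivAt (fun B' : Matrix (Fin M) (Fin M) ℝ => 1 + K * B') LK B := by
    have h0 : HasFDerivAt (fun B' : Matrix (Fin M) (Fin M) ℝ => K * B') LK B := by
      have := LK.hasFDerivAt (x := B)
      exact this
    exact h0.const_add 1
  -- derivative of log det
  set Ldet : Matrix (Fin M) (Fin M) ℝ →L[ℝ] ℝ :=
    LinearMap.toContinuousLinearMap
      ((Matrix.traceLinearMap (Fin M) ℝ ℝ).comp (LinearMap.mulLeft ℝ (adjugate A0))) with hLdet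
  have hdet' : HasFDerivAt (fun B' : Matrix (Fin M) (Fin M) ℝ => (1 + K * B').det)
      (Ldet.comp LK) B := by
    have := (hasFDerivAt_det A0).comp B hinner
    exact this
  have hlog : HasFDerivAt (fun B' : Matrix (Fin M) (Fin M) ℝ => Real.log (1 + K * B').det)
      ((A0.det)⁻¹ • (Ldet.comp LK)) B := by
    have h := (Real.hasDerivAt_log hA0pos.ne').comp_hasFDerivAt B hdet'
    exact h
  -- derivative of the inverse part
  set Linv : Matrix (Fin M) (Fin M) ℝ →L[ℝ] Matrix (Fin M) (Fin M) ℝ :=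
    LinearMap.toContinuousLinearMap
      (-((LinearMap.mulRight ℝ A0⁻¹).comp (LinearMap.mulLeft ℝ A0⁻¹))) with hLinv
  have hinv : HasFDerivAt (fun B' : Matrix (Fin M) (Fin M) ℝ => (1 + K * B')⁻¹)
      (Linv.comp LK) B := by
    have := (hasFDerivAt_matrix_inv A0 hA0u).comp B hinner
    exact this
  set Ltr : Matrix (Fin M) (Fin M) ℝ →L[ℝ] ℝ :=
    LinearMap.toContinuousLinearMap (Matrix.traceLinearMap (Fin M) ℝ ℝ) with hLtr
  have hsub : HasFDerivAt
      (fun B' : Matrix (Fin M) (Fin M) ℝ => (1 : Matrix (Fin M) (Fin M) ℝ) - (1 + K * B')⁻¹)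
      (-(Linv.comp LK)) B := hinv.const_sub 1
  have htr : HasFDerivAt
      (fun B' : Matrix (Fin M) (Fin M) ℝ =>
        ((1 : Matrix (Fin M) (Fin M) ℝ) - (1 + K * B')⁻¹).trace)
      (Ltr.comp (-(Linv.comp LK))) B := by
    exact Ltr.hasFDerivAt.comp B hsub
  -- the simplified function
  have hg : HasFDerivAt
      (fun B' : Matrix (Fin M) (Fin M) ℝ =>
        (1 / 2 : ℝ) * Real.log (1 + K * B').det
          - (1 / 2 : ℝ) * ((1 : Matrix (Fin M) (Fin M) ℝ) - (1 + K * B')⁻¹).trace)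
      ((1 / 2 : ℝ) • ((A0.det)⁻¹ • (Ldet.comp LK))
        - (1 / 2 : ℝ) • (Ltr.comp (-(Linv.comp LK)))) B :=
    (hlog.const_mul (1 / 2 : ℝ)).sub (htr.const_mul (1 / 2 : ℝ))
  -- eventual equality with the original function
  have hev : (fun B' : Matrix (Fin M) (Fin M) ℝ =>
        (1 / 2 : ℝ) * Real.log (1 + K * B').det
          - (1 / 2 : ℝ) * (K * B' * (1 + K * B')⁻¹).trace)
      =ᶠ[nhds B] (fun B' : Matrix (Fin M) (Fin M) ℝ =>
        (1 / 2 : ℝ) * Real.log (1 + K * B').det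
          - (1 / 2 : ℝ) * ((1 : Matrix (Fin M) (Fin M) ℝ) - (1 + K * B')⁻¹).trace) := by
    have hcdet : ContinuousAt (fun B' : Matrix (Fin M) (Fin M) ℝ => (1 + K * B').det) B :=
      ((continuous_const.add (continuous_const.matrix_mul continuous_id)).matrix_det).continuousAt
    have hopen : ∀ᶠ B' in nhds B, (1 + K * B').det ≠ 0 :=
      hcdet.eventually_ne hA0pos.ne'
    filter_upwards [hopen] with B' hB'
    have hu : IsUnit (1 + K * B').det := isUnit_iff_ne_zero.mpr hB'
    have hKB : K * B' * (1 + K * B')⁻¹ = 1 - (1 + K * B')⁻¹ := by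
      calc K * B' * (1 + K * B')⁻¹
          = ((1 + K * B') - 1) * (1 + K * B')⁻¹ := by rw [add_sub_cancel_left]
        _ = 1 - (1 + K * B')⁻¹ := by
            rw [Matrix.sub_mul, Matrix.mul_nonsing_inv _ hu, Matrix.one_mul]
    rw [hKB]
  have hfinal := hg.congr_of_eventuallyEq hev
  -- identify the derivative
  have hD : ((1 / 2 : ℝ) • ((A0.det)⁻¹ • (Ldet.comp LK))
        - (1 / 2 : ℝ) • (Ltr.comp (-(Linv.comp LK))))
      = (LinearMap.toContinuousLinearMap
        ((Matrix.traceLinearMap (Fin M) ℝ ℝ).comp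
          (LinearMap.mulLeft ℝ
            ((1 / 2 : ℝ) • ((1 + K * B)⁻¹ * K * B * K * (1 + B * K)⁻¹))))) := by
    -- the key matrix identity
    have hswap : A0 * K = K * (1 + B * K) := by
      rw [hA0def, Matrix.add_mul, Matrix.mul_add, Matrix.one_mul, Matrix.mul_one,
        Matrix.mul_assoc]
    have hKC : K * (1 + B * K)⁻¹ = A0⁻¹ * K := by
      have h1 : K = A0⁻¹ * (K * (1 + B * K)) := by
        rw [← hswap, ← Matrix.mul_assoc, Matrix.nonsing_inv_mul _ hA0u, Matrix.one_mul]
      calc K * (1 + B * K)⁻¹ = (A0⁻¹ * (K * (1 + B * K))) * (1 + B * K)⁻¹ := by rw [← h1]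
        _ = A0⁻¹ * (K * ((1 + B * K) * (1 + B * K)⁻¹)) := by
            simp only [Matrix.mul_assoc]
        _ = A0⁻¹ * K := by rw [Matrix.mul_nonsing_inv _ hCu, Matrix.mul_one]
    have hmatid : A0⁻¹ * K * B * K * (1 + B * K)⁻¹
        = A0⁻¹ * K - A0⁻¹ * A0⁻¹ * K := by
      calc A0⁻¹ * K * B * K * (1 + B * K)⁻¹
          = A0⁻¹ * (K * B) * (K * (1 + B * K)⁻¹) := by simp only [Matrix.mul_assoc]
        _ = A0⁻¹ * (A0 - 1) * (A0⁻¹ * K) := by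
            rw [hKC, hA0def, add_sub_cancel_left]
        _ = A0⁻¹ * A0 * (A0⁻¹ * K) - A0⁻¹ * (A0⁻¹ * K) := by
            rw [Matrix.mul_sub, Matrix.sub_mul]
            rw [Matrix.mul_one]
        _ = A0⁻¹ * K - A0⁻¹ * A0⁻¹ * K := by
            rw [Matrix.nonsing_inv_mul _ hA0u, Matrix.one_mul, Matrix.mul_assoc]
    refine ContinuousLinearMap.ext fun V => ?_
    simp only [ContinuousLinearMap.coe_sub', Pi.sub_apply, ContinuousLinearMap.coe_smul',
      Pi.smul_apply, ContinuousLinearMap.coe_comp', Function.comp_apply,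
      ContinuousLinearMap.neg_apply, hLdet, hLK, hLinv, hLtr,
      LinearMap.coe_toContinuousLinearMap', LinearMap.coe_comp, LinearMap.mulLeft_apply,
      LinearMap.mulRight_apply, LinearMap.neg_apply, Matrix.traceLinearMap_apply,
      smul_eq_mul]
    -- now a pure trace computation
    have e1 : (A0.det)⁻¹ * (adjugate A0 * (K * V)).trace = ((A0⁻¹ * K) * V).trace := by
      have : A0⁻¹ * (K * V) = (A0.det)⁻¹ • (adjugate A0 * (K * V)) := by
        rw [Matrix.inv_def, Ring.inverse_eq_inv', Matrix.smul_mul]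
      rw [Matrix.mul_assoc A0⁻¹ K V, this, Matrix.trace_smul, smul_eq_mul]
    have e2 : (A0⁻¹ * (K * V) * A0⁻¹).trace = ((A0⁻¹ * A0⁻¹ * K) * V).trace := by
      rw [Matrix.trace_mul_comm, ← Matrix.mul_assoc, ← Matrix.mul_assoc]
    have e3 : ((1 / 2 : ℝ) • (A0⁻¹ * K * B * K * (1 + B * K)⁻¹) * V).trace
        = (1 / 2 : ℝ) * (((A0⁻¹ * K) * V).trace - ((A0⁻¹ * A0⁻¹ * K) * V).trace) := by
      rw [Matrix.smul_mul, Matrix.trace_smul, smul_eq_mul, hmatid, Matrix.sub_mul,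
        Matrix.trace_sub]
    rw [e3, ← e1, neg_neg, e2]
    ring
  rw [hD] at hfinal
  exact hfinal
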